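/- Let (Ω, μ) be a finite measure space with normalized expectation E, U ≥ 0 measurable with E[U] = 1 and E[|U log U|] < ∞. Define the selective entropy S_NS := E[−U log U] (with 0·log 0 := 0) and p* := μ(U>0)/μ(Ω). Then −log(1 + var(U)) ≤ S_NS ≤ log p* ≤ 0, with equality in the two nontrivial inequalities if and only if U ∈ {0, 1/p*} almost everywhere (selective equilibrium), in which case S_NS = log p* = −log(1+var(U)). -/

import Mathlib

open MeasureTheory Real Set

/-- Strong Gibbs Inequality: the selective entropy `S_NS = E[−U log U]` satisfies
`−log(1 + var(U)) ≤ S_NS ≤ log p* ≤ 0`, with equality in the two nontrivial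
inequalities iff `U ∈ {0, 1/p*}` almost everywhere (selective equilibrium). -/
theorem strong_gibbs_inequality
    {Ω : Type*} [MeasurableSpace Ω] (μ : Measure Ω) [IsFiniteMeasure μ]
    (hN : 0 < (μ univ).toReal)
    (U : Ω → ℝ) (hUm : Measurable U) (hU0 : ∀ x, 0 ≤ U x)
    (hU1 : (∫ x, U x ∂μ) / (μ univ).toReal = 1)
    (hU2 : Integrable (fun x => (U x) ^ 2) μ)
    (hent : Integrable (fun x => U x * Real.log (U x)) μ) :
    let N := (μ univ).toReal
    let pstar := (μ {x | 0 < U x}).toReal / N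
    let v := (∫ x, (U x) ^ 2 ∂μ) / N - 1
    let S := (∫ x, -(U x * Real.log (U x)) ∂μ) / N
    (-Real.log (1 + v) ≤ S) ∧ S ≤ Real.log pstar ∧ Real.log pstar ≤ 0 ∧
      ((-Real.log (1 + v) = S ∧ S = Real.log pstar) ↔
        ∀ᵐ x ∂μ, U x = 0 ∨ U x = 1 / pstar) := by
  intro N pstar v S
  have hNne : N ≠ 0 := ne_of_gt hN
  -- U is integrable
  have hUi : Integrable U μ := by
    refine (Integrable.add (integrable_const 1) hU2).mono' hUm.aestronglyMeasurable ?_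
    filter_upwards with x
    rw [Real.norm_of_nonneg (hU0 x)]
    show U x ≤ 1 + U x ^ 2
    rcases le_total (U x) 1 with h | h
    · nlinarith [sq_nonneg (U x)]
    · nlinarith [sq_nonneg (U x - 1)]
  have hIU : ∫ x, U x ∂μ = N := by
    rwa [div_eq_one_iff_eq hNne] at hU1
  -- the childbearing set
  set A : Set Ω := {x | 0 < U x} with hAdef
  have hA : MeasurableSet A := measurableSet_lt measurable_const hUm
  have hUcompl : ∀ x, x ∉ A → U x = 0 := by
    intro x hx
    exact le_antisymm (not_lt.mp hx) (hU0 x)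
  have hAne : μ A ≠ 0 := by
    intro h0
    have hUz : U =ᵐ[μ] 0 := by
      refine measure_mono_null ?_ h0
      intro x hx
      simp only [Pi.zero_apply] at hx
      exact lt_of_le_of_ne (hU0 x) (Ne.symm hx)
    have : ∫ x, U x ∂μ = 0 := by
      rw [integral_congr_ae hUz]; simp
    rw [hIU] at this
    exact hNne this
  have hApos : 0 < (μ A).toReal := ENNReal.toReal_pos hAne (measure_ne_top μ A)
  have hAne' : (μ A).toReal ≠ 0 := ne_of_gt hApos
  have hppos : 0 < pstar := div_pos hApos hN
  have hple : pstar ≤ 1 := by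
    rw [div_le_one hN]
    exact ENNReal.toReal_mono (measure_ne_top μ _) (measure_mono (subset_univ A))
  -- integrals over A equal integrals over Ω
  have hIUA : ∫ x in A, U x ∂μ = N := by
    rw [setIntegral_eq_integral_of_ae_compl_eq_zero
      (Filter.Eventually.of_forall hUcompl), hIU]
  have hentA : ∫ x in A, Real.negMulLog (U x) ∂μ = ∫ x, Real.negMulLog (U x) ∂μ := by
    refine setIntegral_eq_integral_of_ae_compl_eq_zero (Filter.Eventually.of_forall ?_)
    intro x hx
    rw [hUcompl x hx, Real.negMulLog_zero]
  have hSave : S = pstar * ⨍ x in A, Real.negMulLog (U x) ∂μ := by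
    have h1 : ∫ x, -(U x * Real.log (U x)) ∂μ = ∫ x, Real.negMulLog (U x) ∂μ := by
      congr 1; funext x; rw [Real.negMulLog]; ring
    rw [show S = (∫ x, -(U x * Real.log (U x)) ∂μ) / N from rfl, h1, ← hentA,
      setAverage_eq]
    simp only [smul_eq_mul]
    rw [show pstar = (μ A).toReal / N from rfl]
    field_simp
    rw [measureReal_def, mul_div_cancel_right₀ _ hAne']
  have havgU : (⨍ x in A, U x ∂μ) = 1 / pstar := by
    rw [setAverage_eq, hIUA, smul_eq_mul]
    rw [show pstar = (μ A).toReal / N from rfl]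
    field_simp
    rw [measureReal_def, div_self hAne']
  -- integrability of negMulLog ∘ U
  have hnmli : Integrable (fun x => Real.negMulLog (U x)) μ := by
    have h1 : (fun x => Real.negMulLog (U x)) = fun x => -(U x * Real.log (U x)) := by
      funext x; rw [Real.negMulLog]; ring
    rw [h1]; exact hent.neg
  -- Jensen on A (non-strict)
  haveI : NeZero (μ.restrict A) := ⟨by rwa [Ne, Measure.restrict_eq_zero]⟩
  have hjensen : (⨍ x in A, Real.negMulLog (U x) ∂μ) ≤ Real.negMulLog (1 / pstar) := by
    rw [← havgU]
    exact Real.concaveOn_negMulLog.le_map_average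
      Real.continuous_negMulLog.continuousOn isClosed_Ici
      (Filter.Eventually.of_forall fun x => hU0 x) hUi.restrict (hnmli.restrict)
  have hnml_p : Real.negMulLog (1 / pstar) = (1 / pstar) * Real.log pstar := by
    rw [Real.negMulLog, one_div, Real.log_inv]; ring
  have hpmul : pstar * ((1 / pstar) * Real.log pstar) = Real.log pstar := by
    field_simp
  -- upper bound
  have hupper : S ≤ Real.log pstar := by
    rw [hSave]
    calc pstar * ⨍ x in A, Real.negMulLog (U x) ∂μ
        ≤ pstar * Real.negMulLog (1 / pstar) :=
          mul_le_mul_of_nonneg_left hjensen hppos.le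
      _ = Real.log pstar := by rw [hnml_p, hpmul]
  -- log pstar ≤ 0
  have hlogp : Real.log pstar ≤ 0 := Real.log_nonpos hppos.le hple
  -- 1 + v ≥ 1
  have hIU2 : ∫ x, (U x) ^ 2 ∂μ = N * (1 + v) := by
    rw [show v = (∫ x, (U x) ^ 2 ∂μ) / N - 1 from rfl]
    field_simp
    ring
  have hvar : N ≤ ∫ x, (U x) ^ 2 ∂μ := by
    have h1 : (0:ℝ) ≤ ∫ x, (U x - 1) ^ 2 ∂μ :=
      integral_nonneg fun x => sq_nonneg _
    have h2 : ∫ x, (U x - 1) ^ 2 ∂μ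
        = ∫ x, (U x) ^ 2 ∂μ - 2 * ∫ x, U x ∂μ + N := by
      have e : ∀ x, (U x - 1) ^ 2 = (U x) ^ 2 - (2 * U x - 1) := fun x => by ring
      simp_rw [e]
      have i1 : Integrable (fun x => 2 * U x - 1) μ :=
        (hUi.const_mul 2).sub (integrable_const 1)
      have i2 : Integrable (fun x => 2 * U x) μ := hUi.const_mul 2
      rw [integral_sub hU2 i1, integral_sub i2 (integrable_const 1),
        integral_const_mul, integral_const, smul_eq_mul, mul_one]
      rw [show μ.real univ = N from rfl]
      ring
    rw [hIU] at h2
    linarith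
  have hc1 : (1:ℝ) ≤ 1 + v := by
    rw [hIU2] at hvar
    nlinarith
  have hcpos : (0:ℝ) < 1 + v := lt_of_lt_of_le one_pos hc1
  -- lower bound
  have hlower : -Real.log (1 + v) ≤ S := by
    set c := 1 + v with hc
    have hpt : ∀ x, U x * Real.log (U x) ≤ U x * Real.log c + (U x) ^ 2 / c - U x := by
      intro x
      rcases eq_or_lt_of_le (hU0 x) with h | h
      · rw [← h]; simp
      · have hdiv : 0 < U x / c := div_pos h hcpos
        have hlog : Real.log (U x / c) ≤ U x / c - 1 :=
          Real.log_le_sub_one_of_pos hdiv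
        have hmul := mul_le_mul_of_nonneg_left hlog (hU0 x)
        have hsplit : Real.log (U x) = Real.log c + Real.log (U x / c) := by
          rw [Real.log_div (ne_of_gt h) (ne_of_gt hcpos)]; ring
        have heq2 : U x * (U x / c - 1) = (U x) ^ 2 / c - U x := by
          field_simp
        rw [hsplit, mul_add]
        linarith
    have hRHSi : Integrable (fun x => U x * Real.log c + (U x) ^ 2 / c - U x) μ :=
      ((hUi.mul_const _).add (hU2.div_const _)).sub hUi
    have hint := integral_mono hent hRHSi hpt
    have hRHS : ∫ x, (U x * Real.log c + (U x) ^ 2 / c - U x) ∂μ = N * Real.log c := by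
      have i1 : Integrable (fun x => U x * Real.log c + (U x) ^ 2 / c) μ :=
        (hUi.mul_const _).add (hU2.div_const _)
      have i2 : Integrable (fun x => U x * Real.log c) μ := hUi.mul_const _
      rw [integral_sub i1 hUi, integral_add i2 (hU2.div_const _),
        integral_mul_const, integral_div, hIU, hIU2]
      rw [mul_div_assoc, div_self (ne_of_gt hcpos)]
      ring
    rw [hRHS] at hint
    rw [show S = (∫ x, -(U x * Real.log (U x)) ∂μ) / N from rfl, integral_neg,
      le_div_iff₀ hN]
    nlinarith [hint]
  refine ⟨hlower, hupper, hlogp, ?_, ?_⟩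
  · -- equality → equilibrium
    rintro ⟨-, hSeq⟩
    rcases Real.strictConcaveOn_negMulLog.ae_eq_const_or_lt_map_average (μ := μ.restrict A)
      Real.continuous_negMulLog.continuousOn isClosed_Ici
      (Filter.Eventually.of_forall fun x => hU0 x) hUi.restrict hnmli.restrict with
      hconst | hlt
    · have hconst' : ∀ᵐ x ∂(μ.restrict A), U x = 1 / pstar := by
        filter_upwards [hconst] with x hx
        rwa [Function.const_apply, havgU] at hx
      have hae := (ae_restrict_iff' hA).mp hconst'
      filter_upwards [hae] with x hx
      by_cases hxA : x ∈ A
      · exact Or.inr (hx hxA)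
      · exact Or.inl (hUcompl x hxA)
    · exfalso
      rw [havgU] at hlt
      have hlt2 : S < Real.log pstar := by
        rw [hSave]
        calc pstar * ⨍ x in A, Real.negMulLog (U x) ∂μ
            < pstar * Real.negMulLog (1 / pstar) :=
              (mul_lt_mul_iff_right₀ hppos).mpr hlt
          _ = Real.log pstar := by rw [hnml_p, hpmul]
      rw [hSeq] at hlt2
      exact lt_irrefl _ hlt2
  · -- equilibrium → equality
    intro heq
    have hsq : ∫ x, (U x) ^ 2 ∂μ = (1 / pstar) * N := by
      have h1 : (fun x => (U x) ^ 2) =ᵐ[μ] fun x => (1 / pstar) * U x := by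
        filter_upwards [heq] with x hx
        rcases hx with h | h <;> rw [h] <;> ring
      rw [integral_congr_ae h1, integral_const_mul, hIU]
    have hlogint : ∫ x, U x * Real.log (U x) ∂μ = Real.log (1 / pstar) * N := by
      have h1 : (fun x => U x * Real.log (U x)) =ᵐ[μ] fun x => Real.log (1 / pstar) * U x := by
        filter_upwards [heq] with x hx
        rcases hx with h | h <;> rw [h] <;> ring
      rw [integral_congr_ae h1, integral_const_mul, hIU]
    have hveq : 1 + v = 1 / pstar := by
      rw [show v = (∫ x, (U x) ^ 2 ∂μ) / N - 1 from rfl, hsq]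
      field_simp
      ring
    have hSeq : S = Real.log pstar := by
      rw [show S = (∫ x, -(U x * Real.log (U x)) ∂μ) / N from rfl, integral_neg,
        hlogint, one_div, Real.log_inv]
      field_simp
    exact ⟨by rw [hveq, hSeq, one_div, Real.log_inv, neg_neg], hSeq⟩
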